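/- Let ε > 0 and let a, b be real numbers with −1 < a < b. Suppose x₀, x₁, …, x_M is a finite strictly increasing sequence with x₀ = a, e(x_{i−1}, x_i) = ε for every i = 1, …, M, and x_{M−1} < b ≤ x_M (the greedy partition generated by the algorithm). Then for every finite strictly increasing sequence z₀, z₁, …, z_L with z₀ = a, z_L = b, and e(z_{j−1}, z_j) ≤ ε for every j = 1, …, L, one has L ≥ M. In other words, the greedy partition uses the minimum possible number of supporting hyperplanes among all partitions of [a, b] whose consecutive approximation errors do not exceed ε. -/

import Mathlib

/-- The hyperplane-approximation error between tangency points `a < x` (with `a > −1`). -/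
noncomputable def hyperErr (a x : ℝ) : ℝ :=
  ((1 + x) / (x - a)) * Real.log ((1 + x) / (1 + a))
    - Real.log (((1 + x) / (x - a)) * Real.log ((1 + x) / (1 + a))) - 1


noncomputable def hFun (t : ℝ) : ℝ := t * Real.log t / (t - 1)
noncomputable def gFun (u : ℝ) : ℝ := u - Real.log u - 1

lemma log_lt' {t : ℝ} (ht : 1 < t) : Real.log t < t - 1 :=
  Real.log_lt_sub_one_of_pos (by linarith) (by linarith)

lemma log_gt' {t : ℝ} (ht : 1 < t) : 1 - 1/t < Real.log t := by
  have h0 : (0:ℝ) < t := by linarith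
  have := Real.log_lt_sub_one_of_pos (x := 1/t) (by positivity) (by
    intro h; field_simp at h; linarith)
  rw [Real.log_div one_ne_zero (ne_of_gt h0), Real.log_one] at this
  linarith

lemma hFun_gt_one {t : ℝ} (ht : 1 < t) : 1 < hFun t := by
  have h0 : (0:ℝ) < t := by linarith
  have h1 : (0:ℝ) < t - 1 := by linarith
  have := log_gt' ht
  rw [hFun, lt_div_iff₀ h1]
  have : t * (1 - 1/t) < t * Real.log t := by
    apply mul_lt_mul_of_pos_left this h0
  have ht1 : t * (1 - 1/t) = t - 1 := by field_simp
  linarith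

lemma hFun_hasDeriv {t : ℝ} (ht : 1 < t) :
    HasDerivAt hFun ((t - 1 - Real.log t) / (t - 1)^2) t := by
  have h0 : t ≠ 0 := by linarith
  have h1 : t - 1 ≠ 0 := by intro h; linarith [sub_eq_zero.mp h]
  have hnum : HasDerivAt (fun y : ℝ => y * Real.log y) (1 * Real.log t + t * t⁻¹) t :=
    (hasDerivAt_id t).mul (Real.hasDerivAt_log h0)
  have hden : HasDerivAt (fun y : ℝ => y - 1) 1 t := (hasDerivAt_id t).sub_const 1
  have := hnum.div hden h1
  have e : ((1 * Real.log t + t * t⁻¹) * (t - 1) - t * Real.log t * 1) / (t - 1) ^ 2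
      = (t - 1 - Real.log t) / (t - 1) ^ 2 := by
    rw [mul_inv_cancel₀ h0]
    ring
  rw [e] at this
  exact this

lemma hFun_mono : StrictMonoOn hFun (Set.Ioi 1) := by
  apply strictMonoOn_of_deriv_pos (convex_Ioi 1)
  · intro t ht
    exact (hFun_hasDeriv ht).continuousAt.continuousWithinAt
  · intro t ht
    rw [interior_Ioi] at ht
    have ht' : (1:ℝ) < t := ht
    rw [(hFun_hasDeriv ht').deriv]
    have := log_lt' ht'
    have h1 : (0:ℝ) < t - 1 := by linarith
    exact div_pos (by linarith) (by positivity)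

lemma gFun_mono : StrictMonoOn gFun (Set.Ici 1) := by
  apply strictMonoOn_of_deriv_pos (convex_Ici 1)
  · apply ContinuousOn.sub _ continuousOn_const
    apply ContinuousOn.sub continuousOn_id
    apply Real.continuousOn_log.mono
    intro u hu; simp at hu ⊢; intro h; rw [h] at hu; norm_num at hu
  · intro u hu
    rw [interior_Ici] at hu
    have hu1 : (1:ℝ) < u := hu
    have h0 : u ≠ 0 := by linarith
    have : HasDerivAt gFun (1 - u⁻¹) u :=
      (((hasDerivAt_id u).sub (Real.hasDerivAt_log h0)).sub_const 1)
    rw [this.deriv]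
    have : u⁻¹ < 1 := by rw [inv_lt_one_iff₀]; right; exact hu1
    linarith

lemma hyperErr_eq {a x : ℝ} (ha : -1 < a) (hax : a < x) :
    hyperErr a x = gFun (hFun ((1 + x) / (1 + a))) := by
  have h1 : (0:ℝ) < 1 + a := by linarith
  have h2 : x - a ≠ 0 := by intro h; linarith [sub_eq_zero.mp h]
  have key : (1 + x) / (x - a) * Real.log ((1 + x) / (1 + a))
      = hFun ((1 + x) / (1 + a)) := by
    rw [hFun]
    have hden : (1 + x) / (1 + a) - 1 = (x - a) / (1 + a) := by
      field_simp
      ring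
    rw [hden]
    field_simp
  rw [hyperErr, gFun, key]

lemma hyperErr_lt {a x a' x' : ℝ} (ha : -1 < a) (hax : a < x) (ha' : -1 < a')
    (hax' : a' < x') (ht : (1 + x) / (1 + a) < (1 + x') / (1 + a')) :
    hyperErr a x < hyperErr a' x' := by
  rw [hyperErr_eq ha hax, hyperErr_eq ha' hax']
  have m1 : (1:ℝ) < (1 + x) / (1 + a) := by
    rw [lt_div_iff₀ (by linarith)]; linarith
  have m2 : (1:ℝ) < (1 + x') / (1 + a') := by
    rw [lt_div_iff₀ (by linarith)]; linarith
  have hh := hFun_mono m1 m2 ht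
  exact gFun_mono (le_of_lt (hFun_gt_one m1)) (le_of_lt (hFun_gt_one m2)) hh


/-- Optimality of the greedy partition: the partition produced by the algorithm
(with consecutive errors exactly `ε`, stopping as soon as `b` is covered) uses the
minimum possible number of supporting hyperplanes among all partitions of `[a, b]`
whose consecutive approximation errors do not exceed `ε`. -/
theorem greedy_partition_optimal
    (ε a b : ℝ) (hε : 0 < ε) (ha : -1 < a) (hab : a < b)
    (M : ℕ) (hM : 0 < M) (x : ℕ → ℝ)
    (hx0 : x 0 = a)
    (hxmono : ∀ i < M, x i < x (i + 1))
    (hxerr : ∀ i < M, hyperErr (x i) (x (i + 1)) = ε)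
    (hxb1 : x (M - 1) < b) (hxb2 : b ≤ x M)
    (L : ℕ) (hL : 0 < L) (z : ℕ → ℝ)
    (hz0 : z 0 = a) (hzL : z L = b)
    (hzmono : ∀ j < L, z j < z (j + 1))
    (hzerr : ∀ j < L, hyperErr (z j) (z (j + 1)) ≤ ε) :
    M ≤ L := by
  by_contra hcon
  push_neg at hcon  -- L < M
  -- basic monotonicity of x and z
  have hxle : ∀ i j, i ≤ j → j ≤ M → x i ≤ x j := by
    intro i j hij hjM
    induction j with
    | zero => simp at hij; simp [hij]
    | succ k ih =>
      rcases Nat.lt_or_ge i (k+1) with h | h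
      · have : x i ≤ x k := ih (Nat.lt_succ_iff.mp h) (le_trans (Nat.le_succ k) hjM)
        exact le_trans this (le_of_lt (hxmono k (Nat.lt_of_succ_le hjM)))
      · have : i = k + 1 := le_antisymm hij h
        simp [this]
  have hxlb : ∀ i ≤ M, -1 < x i := by
    intro i hi
    have : x 0 ≤ x i := hxle 0 i (Nat.zero_le i) hi
    rw [hx0] at this; linarith
  have hzlb : ∀ j ≤ L, -1 < z j := by
    intro j hj
    induction j with
    | zero => rw [hz0]; exact ha
    | succ k ih =>
      have hk : k < L := Nat.lt_of_succ_le hj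
      have := hzmono k hk
      have := ih (le_of_lt hk)
      linarith
  -- key induction: z i ≤ x i for i ≤ L
  have key : ∀ i ≤ L, z i ≤ x i := by
    intro i hi
    induction i with
    | zero => rw [hx0, hz0]
    | succ k ih =>
      have hkL : k < L := Nat.lt_of_succ_le hi
      have hkM : k < M := lt_trans hkL hcon
      have ihk := ih (le_of_lt hkL)
      by_contra hgt
      push_neg at hgt  -- x (k+1) < z (k+1)
      have hxk : -1 < x k := hxlb k (le_of_lt hkM)
      have hzk : -1 < z k := hzlb k (le_of_lt hkL)
      have hxm := hxmono k hkM
      have hzm := hzmono k hkL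
      have hrat : (1 + x (k+1)) / (1 + x k) < (1 + z (k+1)) / (1 + z k) := by
        have h1 : (0:ℝ) < 1 + z k := by linarith
        have h2 : (0:ℝ) < 1 + x k := by linarith
        calc (1 + x (k+1)) / (1 + x k) ≤ (1 + x (k+1)) / (1 + z k) := by
              apply div_le_div_of_nonneg_left (by linarith) h1 (by linarith)
          _ < (1 + z (k+1)) / (1 + z k) := by
              apply div_lt_div_of_pos_right (by linarith) h1
      have hlt := hyperErr_lt hxk hxm hzk hzm hrat
      have := hzerr k hkL
      rw [hxerr k hkM] at hlt
      linarith
  -- conclude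
  have h1 : z L ≤ x L := key L le_rfl
  have h2 : x L ≤ x (M - 1) := hxle L (M-1) (by omega) (by omega)
  rw [hzL] at h1
  linarith
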